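/- For a probability distribution P on a finite alphabet X and any α > 1, the Rényi entropy satisfies H_α(P) = min over all probability distributions Q on X of [ (α/(α−1))·D(Q‖P) + H(Q) ], where the minimum is attained. -/

import Mathlib

open scoped Classical BigOperators

noncomputable def shannonEntropy {X : Type*} [Fintype X] (Q : X → ℝ) : ℝ :=
  -∑ x, Q x * Real.log (Q x)

noncomputable def klDiv {X : Type*} [Fintype X] (Q P : X → ℝ) : EReal :=
  if ∀ x, 0 < Q x → 0 < P x then
    ((∑ x, Q x * Real.log (Q x / P x) : ℝ) : EReal)
  else ⊤

noncomputable def renyiEntropy {X : Type*} [Fintype X] (α : ℝ) (P : X → ℝ) : ℝ :=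
  (1 / (1 - α)) * Real.log (∑ x, P x ^ α)

noncomputable def renyiDiv {X : Type*} [Fintype X] (α : ℝ) (P1 P2 : X → ℝ) : EReal :=
  if 1 < α ∧ ¬ (∀ x, 0 < P1 x → 0 < P2 x) then ⊤
  else if ∀ x, ¬ (0 < P1 x ∧ 0 < P2 x) then ⊤
  else ((1 / (α - 1)) *
      Real.log (∑ x, if 0 < P1 x ∧ 0 < P2 x then P1 x ^ α * P2 x ^ (1 - α) else 0) : ℝ)

def IsPMF {X : Type*} [Fintype X] (P : X → ℝ) : Prop :=
  (∀ x, 0 ≤ P x) ∧ ∑ x, P x = 1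

lemma jensen_key {X : Type*} [Fintype X] (P Q : X → ℝ) (hP : IsPMF P) (hQ : IsPMF Q)
    (hQP : ∀ x, 0 < Q x → 0 < P x) (α : ℝ) (hα : 1 < α) :
    ∑ x, Q x * Real.log (P x ^ α / Q x) ≤ Real.log (∑ x, P x ^ α) := by
  obtain ⟨hQ0, hQ1⟩ := hQ
  obtain ⟨hP0, _⟩ := hP
  set T : Finset X := Finset.univ.filter (fun x => 0 < Q x) with hT
  have hzero : ∀ x, x ∉ T → Q x = 0 := by
    intro x hx
    simp only [hT, Finset.mem_filter, Finset.mem_univ, true_and] at hx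
    exact le_antisymm (not_lt.mp hx) (hQ0 x)
  have hQmem : ∀ x ∈ T, 0 < Q x := by
    intro x hx
    simpa [hT] using hx
  have hsumT : ∑ x ∈ T, Q x = 1 := by
    rw [← hQ1]
    exact Finset.sum_subset (Finset.subset_univ T) (fun x _ hx => hzero x hx)
  have hLHS : ∑ x, Q x * Real.log (P x ^ α / Q x) =
      ∑ x ∈ T, Q x * Real.log (P x ^ α / Q x) := by
    exact (Finset.sum_subset (Finset.subset_univ T)
      (fun x _ hx => by rw [hzero x hx, zero_mul])).symm
  rw [hLHS]
  have hmem : ∀ x ∈ T, P x ^ α / Q x ∈ Set.Ioi (0:ℝ) := by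
    intro x hx
    exact div_pos (Real.rpow_pos_of_pos (hQP x (hQmem x hx)) α) (hQmem x hx)
  have hjen := strictConcaveOn_log_Ioi.concaveOn.le_map_sum
    (fun x hx => (hQmem x hx).le) hsumT hmem
  simp only [smul_eq_mul] at hjen
  have hsum_eq : ∑ x ∈ T, Q x * (P x ^ α / Q x) = ∑ x ∈ T, P x ^ α := by
    refine Finset.sum_congr rfl fun x hx => ?_
    rw [mul_div_cancel₀ _ (hQmem x hx).ne']
  rw [hsum_eq] at hjen
  refine hjen.trans (Real.log_le_log ?_ ?_)
  · have hTne : T.Nonempty := by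
      by_contra h
      rw [Finset.not_nonempty_iff_eq_empty] at h
      rw [h, Finset.sum_empty] at hsumT
      norm_num at hsumT
    obtain ⟨x, hx⟩ := hTne
    exact Finset.sum_pos' (fun y _ => Real.rpow_nonneg (hP0 y) α)
      ⟨x, hx, Real.rpow_pos_of_pos (hQP x (hQmem x hx)) α⟩
  · exact Finset.sum_le_sum_of_subset_of_nonneg (Finset.subset_univ T)
      (fun y _ _ => Real.rpow_nonneg (hP0 y) α)

theorem renyi_entropy_char_gt_one {X : Type*} [Fintype X] (P : X → ℝ) (hP : IsPMF P)
    (α : ℝ) (hα : 1 < α) :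
    IsLeast {v : EReal | ∃ Q : X → ℝ, IsPMF Q ∧
        v = ((α / (α - 1) : ℝ) : EReal) * klDiv Q P + ((shannonEntropy Q : ℝ) : EReal)}
      ((renyiEntropy α P : ℝ) : EReal) := by
  obtain ⟨hP0, hP1⟩ := hP
  have hα1 : (0:ℝ) < α - 1 := by linarith
  have h1α : (1:ℝ) - α ≠ 0 := by intro h; linarith [h]
  have hαne : α ≠ 0 := by positivity
  set S := ∑ x, P x ^ α with hS
  have hex : ∃ x, 0 < P x := by
    by_contra h
    push_neg at h
    have : ∑ x, P x = 0 := Finset.sum_eq_zero fun x _ => le_antisymm (h x) (hP0 x)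
    rw [hP1] at this; norm_num at this
  have hSpos : 0 < S := by
    obtain ⟨x, hx⟩ := hex
    exact Finset.sum_pos' (fun y _ => Real.rpow_nonneg (hP0 y) α)
      ⟨x, Finset.mem_univ x, Real.rpow_pos_of_pos hx α⟩
  constructor
  · -- membership: the minimizer Q*(x) = P(x)^α / S
    set Qs : X → ℝ := fun x => P x ^ α / S with hQs
    have hQs0 : ∀ x, 0 ≤ Qs x := fun x =>
      div_nonneg (Real.rpow_nonneg (hP0 x) α) hSpos.le
    have hQs1 : ∑ x, Qs x = 1 := by
      rw [hQs]
      rw [← Finset.sum_div, ← hS, div_self hSpos.ne']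
    have hQsP : ∀ x, 0 < Qs x → 0 < P x := by
      intro x hx
      rcases (hP0 x).lt_or_eq with h | h
      · exact h
      · exfalso
        have : Qs x = 0 := by
          simp [hQs, ← h, Real.zero_rpow hαne]
        rw [this] at hx; exact lt_irrefl 0 hx
    refine ⟨Qs, ⟨hQs0, hQs1⟩, ?_⟩
    rw [klDiv, if_pos hQsP, ← EReal.coe_mul, ← EReal.coe_add, EReal.coe_eq_coe_iff]
    have key : ∀ x, α/(α-1) * (Qs x * Real.log (Qs x / P x)) - Qs x * Real.log (Qs x)
        = Qs x * ((1/(1-α)) * Real.log S) := by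
      intro x
      rcases (hP0 x).lt_or_eq with hx | hx
      · have hPα : 0 < P x ^ α := Real.rpow_pos_of_pos hx α
        have hQpos : 0 < Qs x := div_pos hPα hSpos
        have l1 : Real.log (Qs x) = α * Real.log (P x) - Real.log S := by
          rw [hQs]
          simp only
          rw [Real.log_div hPα.ne' hSpos.ne', Real.log_rpow hx]
        have l2 : Real.log (Qs x / P x) = Real.log (Qs x) - Real.log (P x) :=
          Real.log_div hQpos.ne' hx.ne'
        rw [l2, l1]
        field_simp
        ring
      · have hq : Qs x = 0 := by
          simp [hQs, ← hx, Real.zero_rpow hαne]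
        rw [hq]; ring
    have hsum : ∑ x, (α/(α-1) * (Qs x * Real.log (Qs x / P x)) - Qs x * Real.log (Qs x))
        = (1/(1-α)) * Real.log S := by
      rw [Finset.sum_congr rfl (fun x _ => key x), ← Finset.sum_mul, hQs1, one_mul]
    rw [renyiEntropy, shannonEntropy, ← hS, ← hsum, Finset.sum_sub_distrib,
      ← Finset.mul_sum, sub_eq_add_neg]
  · -- lower bound
    rintro v ⟨Q, hQ, rfl⟩
    obtain ⟨hQ0, hQ1⟩ := hQ
    rw [klDiv]
    split_ifs with h
    · rw [← EReal.coe_mul, ← EReal.coe_add, EReal.coe_le_coe_iff]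
      have hJ := jensen_key P Q ⟨hP0, hP1⟩ ⟨hQ0, hQ1⟩ h α hα
      rw [← hS] at hJ
      set J := ∑ x, Q x * Real.log (P x ^ α / Q x) with hJdef
      have e1 : ∀ x, α/(α-1) * (Q x * Real.log (Q x / P x)) - Q x * Real.log (Q x)
          = -(1/(α-1)) * (Q x * Real.log (P x ^ α / Q x)) := by
        intro x
        rcases (hQ0 x).lt_or_eq with hx | hx
        · have hPx : 0 < P x := h x hx
          have hPα : 0 < P x ^ α := Real.rpow_pos_of_pos hPx α
          rw [Real.log_div hx.ne' hPx.ne', Real.log_div hPα.ne' hx.ne',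
            Real.log_rpow hPx]
          field_simp
          ring
        · rw [← hx]; ring
      have hrew : α/(α-1) * (∑ x, Q x * Real.log (Q x / P x)) +
          -(∑ x, Q x * Real.log (Q x)) = -(1/(α-1)) * J := by
        rw [hJdef, Finset.mul_sum, Finset.mul_sum, ← sub_eq_add_neg,
          ← Finset.sum_sub_distrib]
        exact Finset.sum_congr rfl (fun x _ => e1 x)
      rw [renyiEntropy, shannonEntropy, ← hS, hrew]
      have hk : 0 < 1/(α-1) := by positivity
      have := mul_le_mul_of_nonneg_left hJ hk.le
      have heq : (1:ℝ)/(1-α) = -(1/(α-1)) := by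
        field_simp
        ring
      rw [heq]
      nlinarith [this]
    · have hc : (0:ℝ) < α / (α - 1) := div_pos (by linarith) hα1
      rw [EReal.coe_mul_top_of_pos hc, EReal.top_add_coe]
      exact le_top
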